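/- In a free group F, the set of tuples defined by a finite conjunction of word equations is also definable by a single word equation: for any finite system of equations w₁(X)=1, …, wₖ(X)=1 over a nonabelian free group F (with coefficients from F allowed), there exists a single word w(X) such that for every tuple of values in F, w(X)=1 holds if and only if all wᵢ(X)=1 hold. -/

import Mathlib

namespace FGAux
open List FreeGroup

variable {α : Type*}

/-- Adjacent pair is non-cancelling. -/
def R : α × Bool → α × Bool → Prop := fun c d => c.1 = d.1 → c.2 = d.2

/-- A word is reduced: no adjacent cancelling pair. -/
def IsRed (L : List (α × Bool)) : Prop := List.Chain' (R) L

lemma isRed_nil : IsRed ([] : List (α × Bool)) := List.isChain_nil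

lemma isRed_singleton (c : α × Bool) : IsRed [c] := List.isChain_singleton c

section DE
variable [DecidableEq α]

lemma isRed_reduce (L : List (α × Bool)) : IsRed (reduce L) := by
  induction L with
  | nil => simp [IsRed, List.Chain']
  | cons x L ih =>
    rw [reduce.cons]
    rcases h : reduce L with _ | ⟨hd, tl⟩
    · exact isRed_singleton x
    · rw [h] at ih
      by_cases hc : x.1 = hd.1 ∧ x.2 = !hd.2
      · simp only [hc, if_true]
        exact ih.tail
      · simp only [hc, if_false]
        refine List.isChain_cons_cons.2 ⟨?_, ih⟩
        intro h1
        by_contra h2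
        apply hc
        refine ⟨h1, ?_⟩
        cases hx : x.2 <;> cases hh : hd.2 <;> simp_all

lemma reduce_eq_self_of_isRed {L : List (α × Bool)} (h : IsRed L) : reduce L = L := by
  induction L with
  | nil => rfl
  | cons x L ih =>
    have hL : IsRed L := h.tail
    rw [reduce.cons, ih hL]
    rcases L with _ | ⟨hd, tl⟩
    · rfl
    · have hR : R x hd := (List.isChain_cons_cons.1 h).1
      have : ¬(x.1 = hd.1 ∧ x.2 = !hd.2) := by
        rintro ⟨h1, h2⟩
        have := hR h1
        cases hx : x.2 <;> cases hh : hd.2 <;> simp_all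
      simp [this]

lemma toWord_mk_isRed {L : List (α × Bool)} (h : IsRed L) : (mk L).toWord = L := by
  rw [toWord_mk, reduce_eq_self_of_isRed h]

lemma isRed_toWord (x : FreeGroup α) : IsRed x.toWord := by
  rw [← reduce_toWord]; exact isRed_reduce _

lemma norm_mk_isRed {L : List (α × Bool)} (h : IsRed L) : norm (mk L) = L.length := by
  rw [FreeGroup.norm, toWord_mk_isRed h]

end DE

lemma IsRed.append_left {L₁ L₂ : List (α × Bool)} (h : IsRed (L₁ ++ L₂)) : IsRed L₁ :=
  (List.isChain_append.1 h).1

lemma IsRed.append_right {L₁ L₂ : List (α × Bool)} (h : IsRed (L₁ ++ L₂)) : IsRed L₂ :=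
  (List.isChain_append.1 h).2.1

lemma isRed_append {L₁ L₂ : List (α × Bool)} (h₁ : IsRed L₁) (h₂ : IsRed L₂)
    (h : ∀ x ∈ L₁.getLast?, ∀ y ∈ L₂.head?, R x y) : IsRed (L₁ ++ L₂) :=
  List.isChain_append.2 ⟨h₁, h₂, h⟩

/-- inverse of a letter -/
def inv1 (c : α × Bool) : α × Bool := (c.1, !c.2)

lemma invRev_eq (L : List (α × Bool)) : FreeGroup.invRev L = (L.map inv1).reverse := by
  simp [FreeGroup.invRev, inv1]

lemma invRev_append (L₁ L₂ : List (α × Bool)) :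
    FreeGroup.invRev (L₁ ++ L₂) = FreeGroup.invRev L₂ ++ FreeGroup.invRev L₁ := by
  simp [invRev_eq]

lemma invRev_singleton (c : α × Bool) : FreeGroup.invRev [c] = [inv1 c] := by
  simp [invRev_eq]

lemma invRev_cons (c : α × Bool) (L : List (α × Bool)) :
    FreeGroup.invRev (c :: L) = FreeGroup.invRev L ++ [inv1 c] := by
  simp [invRev_eq]

lemma isRed_invRev {L : List (α × Bool)} (h : IsRed L) : IsRed (FreeGroup.invRev L) := by
  rw [invRev_eq]
  rw [IsRed, List.Chain', List.isChain_reverse, List.isChain_map]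
  refine h.imp ?_
  rintro ⟨a, b⟩ ⟨a', b'⟩ hr
  simp only [flip, R, inv1] at *
  intro h1
  have := hr h1.symm
  simp_all



/-- no wrap-around cancellation: not of the form c ⋯ c⁻¹ -/
def NoWrap (m : List (α × Bool)) : Prop := ∀ c mid, m ≠ c :: (mid ++ [inv1 c])

lemma nowrap_nil : NoWrap ([] : List (α × Bool)) := by
  intro c mid h; simp at h

lemma inv1_ne_self (c : α × Bool) : inv1 c ≠ c := by
  rcases c with ⟨a, b⟩; cases b <;> simp [inv1]

lemma decomp [DecidableEq α] : ∀ (n : ℕ) (L : List (α × Bool)), L.length ≤ n → IsRed L →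
    ∃ r m, L = r ++ (m ++ FreeGroup.invRev r) ∧ NoWrap m ∧ (m = [] → r = []) := by
  intro n
  induction n with
  | zero =>
    intro L hlen _
    have : L = [] := by simpa using hlen
    subst this
    exact ⟨[], [], by simp [FreeGroup.invRev_empty], nowrap_nil, fun _ => rfl⟩
  | succ n ih =>
    intro L hlen hred
    rcases L with _ | ⟨c, L'⟩
    · exact ⟨[], [], by simp [FreeGroup.invRev_empty], nowrap_nil, fun _ => rfl⟩
    rcases eq_nil_or_concat L' with hL' | ⟨mid, d, hL'⟩
    · subst hL'
      refine ⟨[], [c], by simp [FreeGroup.invRev_empty], ?_, by simp⟩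
      intro c' mid' hh
      have := congrArg List.length hh
      simp at this
    · rw [List.concat_eq_append] at hL'
      subst hL'
      by_cases hcd : d = inv1 c
      · subst hcd
        have hredmid : IsRed mid := by
          have h1 : IsRed (c :: mid) := by
            have : c :: (mid ++ [inv1 c]) = (c :: mid) ++ [inv1 c] := by simp
            rw [IsRed, List.Chain', this, List.isChain_append] at hred
            exact hred.1
          exact h1.tail
        have hlenmid : mid.length ≤ n := by
          simp only [List.length_cons, List.length_append, List.length_singleton] at hlen
          omega
        obtain ⟨r', m', hsplit, hnw, hnil⟩ := ih mid hlenmid hredmid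
        refine ⟨c :: r', m', ?_, hnw, ?_⟩
        · rw [invRev_cons, hsplit]
          simp
        · intro hm'
          exfalso
          have hr' := hnil hm'
          subst hm'; subst hr'
          simp [FreeGroup.invRev_empty] at hsplit
          subst hsplit
          -- L = [c, inv1 c] is reduced: contradiction
          have : R c (inv1 c) := (List.isChain_cons_cons.1 hred).1
          rcases c with ⟨a, b⟩
          have := this rfl
          cases b <;> simp [inv1] at this
      · refine ⟨[], c :: (mid ++ [d]), by simp [FreeGroup.invRev_empty], ?_, by simp⟩
        intro c' mid' hh
        rw [List.cons_eq_cons] at hh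
        obtain ⟨hc, htail⟩ := hh
        have : some d = some (inv1 c') := by
          rw [← List.getLast?_concat (l := mid), htail, List.getLast?_concat]
        apply hcd
        rw [Option.some_inj] at this
        rw [this, hc]

lemma nowrap_junction {m : List (α × Bool)} (hm : NoWrap m) :
    ∀ x ∈ m.getLast?, ∀ y ∈ m.head?, R x y := by
  intro x hx y hy h1
  by_contra h2
  have hxy : x = inv1 y := by
    rcases x with ⟨a, b⟩; rcases y with ⟨a', b'⟩
    simp only at h1
    subst h1
    simp only [inv1, Prod.mk.injEq, true_and]
    cases b <;> cases b' <;> simp_all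
  rcases m with _ | ⟨y0, tail⟩
  · simp at hy
  obtain rfl : y0 = y := by
    have : (y0 :: tail).head? = some y := hy
    simpa using this
  rcases eq_nil_or_concat tail with ht | ⟨mid, z, ht⟩
  · subst ht
    have hxy2 : y0 = x := by
      have : ([y0] : List (α × Bool)).getLast? = some x := hx
      simpa using this
    exact inv1_ne_self y0 (by rw [← hxy, ← hxy2])
  · rw [List.concat_eq_append] at ht
    subst ht
    have hz : z = x := by
      have h5 : (y0 :: (mid ++ [z])).getLast? = some x := hx
      rw [show y0 :: (mid ++ [z]) = (y0 :: mid) ++ [z] from rfl, List.getLast?_concat] at h5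
      simpa using h5
    exact hm y0 mid (by rw [hz, hxy])

lemma isRed_double {r m : List (α × Bool)}
    (hred : IsRed (r ++ (m ++ FreeGroup.invRev r))) (hnw : NoWrap m) :
    IsRed (r ++ (m ++ (m ++ FreeGroup.invRev r))) := by
  rcases eq_or_ne m [] with hm | hm
  · subst hm; simpa using hred
  have h1 : IsRed r := (List.isChain_append.1 hred).1
  have h2 : IsRed (m ++ FreeGroup.invRev r) := (List.isChain_append.1 hred).2.1
  have j1 := (List.isChain_append.1 hred).2.2
  have h3 : IsRed m := (List.isChain_append.1 h2).1
  have h4 : IsRed (FreeGroup.invRev r) := (List.isChain_append.1 h2).2.1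
  have j2 := (List.isChain_append.1 h2).2.2
  have jm := nowrap_junction hnw
  refine isRed_append h1 ?_ ?_
  · refine isRed_append h3 h2 ?_
    intro x hx y hy
    rw [List.head?_append_of_ne_nil m hm] at hy
    exact jm x hx y hy
  · intro x hx y hy
    rw [List.head?_append_of_ne_nil m hm] at hy
    exact j1 x hx y (by rw [List.head?_append_of_ne_nil m hm]; exact hy)

lemma mk_sq (r m : List (α × Bool)) :
    (mk (r ++ (m ++ FreeGroup.invRev r))) ^ 2 = mk (r ++ (m ++ (m ++ FreeGroup.invRev r))) := by
  have h1 : mk (r ++ (m ++ FreeGroup.invRev r)) = mk r * mk m * (mk r)⁻¹ := by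
    rw [FreeGroup.inv_mk, FreeGroup.mul_mk, FreeGroup.mul_mk, List.append_assoc]
  have h2 : mk (r ++ (m ++ (m ++ FreeGroup.invRev r))) = mk r * (mk m * mk m) * (mk r)⁻¹ := by
    rw [FreeGroup.inv_mk, FreeGroup.mul_mk, FreeGroup.mul_mk, FreeGroup.mul_mk]
    simp [List.append_assoc]
  rw [h1, h2, sq]
  group

lemma toWord_sq [DecidableEq α] {x : FreeGroup α} (hx : x ≠ 1) :
    ∃ r m, m ≠ [] ∧ x.toWord = r ++ (m ++ FreeGroup.invRev r) ∧
      (x ^ 2).toWord = r ++ (m ++ (m ++ FreeGroup.invRev r)) := by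
  obtain ⟨r, m, hsplit, hnw, hnil⟩ := decomp (x.toWord.length) x.toWord le_rfl (isRed_toWord x)
  have hm : m ≠ [] := by
    intro h
    have hr := hnil h
    subst h; subst hr
    simp [FreeGroup.invRev_empty] at hsplit
    exact hx hsplit
  have hredfull : IsRed (r ++ (m ++ FreeGroup.invRev r)) := by
    rw [← hsplit]; exact isRed_toWord x
  refine ⟨r, m, hm, hsplit, ?_⟩
  have hx2 : x ^ 2 = mk (r ++ (m ++ (m ++ FreeGroup.invRev r))) := by
    conv_lhs => rw [← FreeGroup.mk_toWord (x := x), hsplit]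
    exact mk_sq r m
  rw [hx2, toWord_mk_isRed (isRed_double hredfull hnw)]

lemma sq_eq_one [DecidableEq α] {x : FreeGroup α} (h : x ^ 2 = 1) : x = 1 := by
  by_contra hx
  obtain ⟨r, m, hm, _, hsq⟩ := toWord_sq hx
  rw [h, FreeGroup.toWord_one] at hsq
  have := congrArg List.length hsq
  simp at this
  exact hm (List.length_eq_zero_iff.1 (by omega))

lemma sq_eq_pow4 [DecidableEq α] {x : FreeGroup α} {c : α} (h : x ^ 2 = (FreeGroup.of c) ^ 4) :
    x = (FreeGroup.of c) ^ 2 := by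
  by_cases hx : x = 1
  · exfalso
    subst hx
    rw [one_pow] at h
    have := congrArg FreeGroup.toWord h
    rw [FreeGroup.toWord_one, FreeGroup.toWord_of_pow] at this
    simp at this
  obtain ⟨r, m, hm, hword, hsq⟩ := toWord_sq hx
  rw [h, FreeGroup.toWord_of_pow] at hsq
  -- r = []
  have hr : r = [] := by
    rcases r with _ | ⟨c₀, r'⟩
    · rfl
    exfalso
    have hhead : ((c₀ :: r') ++ (m ++ (m ++ FreeGroup.invRev (c₀ :: r')))).head? = some c₀ := by
      simp
    have hlast : ((c₀ :: r') ++ (m ++ (m ++ FreeGroup.invRev (c₀ :: r')))).getLast? = some (inv1 c₀) := by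
      rw [invRev_cons]
      rw [show (c₀ :: r') ++ (m ++ (m ++ (FreeGroup.invRev r' ++ [inv1 c₀]))) =
        ((c₀ :: r') ++ (m ++ (m ++ FreeGroup.invRev r'))) ++ [inv1 c₀] by simp, List.getLast?_concat]
    rw [← hsq] at hhead hlast
    have h4 : (List.replicate 4 (c, true)).head? = some (c, true) := by simp
    have h5 : (List.replicate 4 (c, true)).getLast? = some (c, true) := by
      rw [show List.replicate 4 (c, true) = List.replicate 3 (c,true) ++ [(c,true)] by simp [List.replicate], List.getLast?_concat]
    rw [h4] at hhead
    rw [h5] at hlast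
    have e1 : c₀ = (c, true) := by simpa using hhead.symm
    have e2 : inv1 c₀ = (c, true) := by simpa using hlast.symm
    rw [e1] at e2
    simp [inv1] at e2
  subst hr
  simp only [FreeGroup.invRev_empty, List.append_nil, List.nil_append] at hsq hword
  -- m ++ m = replicate 4
  have hlen : m.length = 2 := by
    have := congrArg List.length hsq
    simp at this
    omega
  have hmval : m = List.replicate 2 (c, true) := by
    have := congrArg (List.take 2) hsq
    rw [← hlen] at this
    rw [List.take_left] at this
    rw [hlen] at this
    simpa using this.symm
  apply FreeGroup.toWord_injective
  rw [hword, hmval, FreeGroup.toWord_of_pow]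





lemma head?_invRev (L : List (α × Bool)) :
    (FreeGroup.invRev L).head? = L.getLast?.map inv1 := by
  rw [invRev_eq, List.head?_reverse, List.getLast?_map]

lemma getLast?_invRev (L : List (α × Bool)) :
    (FreeGroup.invRev L).getLast? = L.head?.map inv1 := by
  rw [invRev_eq, List.getLast?_reverse, List.head?_map]

lemma invRev_ne_nil {L : List (α × Bool)} (h : L ≠ []) : FreeGroup.invRev L ≠ [] := by
  rw [invRev_eq]
  simpa using h

lemma of_eq_mk (c : α) : (FreeGroup.of c : FreeGroup α) = mk [(c, true)] := rfl

lemma of_inv_eq_mk (c : α) : (FreeGroup.of c : FreeGroup α)⁻¹ = mk [(c, false)] := by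
  rw [of_eq_mk, FreeGroup.inv_mk, invRev_singleton]
  rfl

lemma comm_mk (c : α) (L : List (α × Bool)) :
    mk L * FreeGroup.of c * (mk L)⁻¹ * (FreeGroup.of c)⁻¹ =
      mk (((L ++ [(c, true)]) ++ FreeGroup.invRev L) ++ [(c, false)]) := by
  rw [of_inv_eq_mk, of_eq_mk, FreeGroup.inv_mk, FreeGroup.mul_mk, FreeGroup.mul_mk,
    FreeGroup.mul_mk]

lemma isRed_comm (c : α) {L : List (α × Bool)} (hred : IsRed L) (hne : L ≠ [])
    (hh : ∀ p ∈ L.head?, p.1 ≠ c) (hl : ∀ p ∈ L.getLast?, p.1 ≠ c) :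
    IsRed (((L ++ [(c, true)]) ++ FreeGroup.invRev L) ++ [(c, false)]) := by
  have h1 : IsRed (L ++ [(c, true)]) := by
    refine isRed_append hred (isRed_singleton _) ?_
    intro x hx y hy h
    exfalso
    have hy' : ((c, true) : α × Bool) = y := by simpa using hy
    rw [← hy'] at h
    exact hl x hx h
  have h2 : IsRed ((L ++ [(c, true)]) ++ FreeGroup.invRev L) := by
    refine isRed_append h1 (isRed_invRev hred) ?_
    intro x hx y hy h
    exfalso
    rw [List.getLast?_concat] at hx
    simp only [Option.mem_def, Option.some_inj] at hx
    subst hx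
    rw [head?_invRev] at hy
    simp only [Option.mem_def, Option.map_eq_some_iff] at hy
    obtain ⟨p, hp, rfl⟩ := hy
    exact hl p hp (by simpa [inv1] using h.symm)
  refine isRed_append h2 (isRed_singleton _) ?_
  intro x hx y hy h
  exfalso
  simp only [Option.mem_def] at hx
  rw [List.getLast?_append_of_ne_nil _ (invRev_ne_nil hne)] at hx
  rw [getLast?_invRev] at hx
  simp only [Option.mem_def, Option.map_eq_some_iff] at hx
  obtain ⟨p, hp, rfl⟩ := hx
  have hy' : ((c, false) : α × Bool) = y := by simpa using hy
  rw [← hy'] at h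
  exact hh p hp (by simpa [inv1] using h)

/-- The key combinatorial lemma: a commutator `[x, of c]` which is a square is trivial. -/
lemma core (c : α) [DecidableEq α] : ∀ (N : ℕ) (x h : FreeGroup α), FreeGroup.norm x ≤ N →
    x * of c * x⁻¹ * (of c)⁻¹ = h * h → x * of c * x⁻¹ * (of c)⁻¹ = 1 := by
  intro N
  induction N with
  | zero =>
    intro x h hn _
    have : x = 1 := by
      have := Nat.le_zero.1 hn
      rwa [FreeGroup.norm_eq_zero] at this
    subst this
    group
  | succ N ih =>
    intro x h hn heq
    rcases eq_nil_or_concat x.toWord with hL | ⟨L₀, d, hL⟩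
    · have : x = 1 := FreeGroup.toWord_eq_nil_iff.1 hL
      subst this
      group
    rw [List.concat_eq_append] at hL
    have hredL : IsRed (L₀ ++ [d]) := by rw [← hL]; exact isRed_toWord x
    have hxeq : x = mk L₀ * mk [d] := by
      conv_lhs => rw [← FreeGroup.mk_toWord (x := x), hL, ← FreeGroup.mul_mk]
    by_cases hdc : d.1 = c
    · -- strip last letter
      have hd : mk [d] = (of c : FreeGroup α) ^ (cond d.2 (1 : ℤ) (-1)) := by
        rcases d with ⟨a, b⟩
        simp only at hdc
        rw [← hdc]
        cases b
        · show mk [(a, false)] = (of a : FreeGroup α) ^ (-1 : ℤ)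
          rw [zpow_neg, zpow_one, of_inv_eq_mk]
        · show mk [(a, true)] = (of a : FreeGroup α) ^ (1 : ℤ)
          rw [zpow_one, of_eq_mk]
      have hcomm : x * of c * x⁻¹ * (of c)⁻¹ = mk L₀ * of c * (mk L₀)⁻¹ * (of c)⁻¹ := by
        rw [hxeq, hd]
        group
      have hnorm : FreeGroup.norm (mk L₀) ≤ N := by
        have h1 : FreeGroup.norm (mk L₀) = L₀.length := norm_mk_isRed hredL.append_left
        have h2 : FreeGroup.norm x = L₀.length + 1 := by
          rw [FreeGroup.norm, hL]
          simp
        omega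
      rw [hcomm] at heq ⊢
      exact ih (mk L₀) h hnorm heq
    · by_cases hhc : ∃ p ∈ x.toWord.head?, p.1 = c
      · -- strip first letter
        obtain ⟨p, hp, hpc⟩ := hhc
        rcases hM : x.toWord with _ | ⟨p0, L₁⟩
        · rw [hM] at hL; simp at hL
        have hp0 : p0 = p := by rw [hM] at hp; simpa using hp
        have hpc0 : p0.1 = c := by rw [hp0]; exact hpc
        have hxeq2 : x = mk [p0] * mk L₁ := by
          rw [FreeGroup.mul_mk]
          conv_lhs => rw [← FreeGroup.mk_toWord (x := x), hM]
          rfl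
        have hredM : IsRed (p0 :: L₁) := by rw [← hM]; exact isRed_toWord x
        have hp' : mk [p0] = (of c : FreeGroup α) ^ (cond p0.2 (1 : ℤ) (-1)) := by
          rcases p0 with ⟨a, b⟩
          simp only at hpc0
          rw [← hpc0]
          cases b
          · show mk [(a, false)] = (of a : FreeGroup α) ^ (-1 : ℤ)
            rw [zpow_neg, zpow_one, of_inv_eq_mk]
          · show mk [(a, true)] = (of a : FreeGroup α) ^ (1 : ℤ)
            rw [zpow_one, of_eq_mk]
        set k : ℤ := cond p0.2 (1 : ℤ) (-1) with hk
        have hcomm : x * of c * x⁻¹ * (of c)⁻¹ =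
            (of c) ^ k * (mk L₁ * of c * (mk L₁)⁻¹ * (of c)⁻¹) * ((of c) ^ k)⁻¹ := by
          rw [hxeq2, hp']
          group
        have heq2 : mk L₁ * of c * (mk L₁)⁻¹ * (of c)⁻¹ =
            (((of c) ^ k)⁻¹ * h * (of c) ^ k) * (((of c) ^ k)⁻¹ * h * (of c) ^ k) := by
          have hmid : (of c) ^ k * (mk L₁ * of c * (mk L₁)⁻¹ * (of c)⁻¹) * ((of c) ^ k)⁻¹ = h * h := by
            rw [← hcomm]; exact heq
          calc mk L₁ * of c * (mk L₁)⁻¹ * (of c)⁻¹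
              = ((of c) ^ k)⁻¹ * ((of c) ^ k * (mk L₁ * of c * (mk L₁)⁻¹ * (of c)⁻¹) * ((of c) ^ k)⁻¹) * (of c) ^ k := by group
            _ = ((of c) ^ k)⁻¹ * (h * h) * (of c) ^ k := by rw [hmid]
            _ = (((of c) ^ k)⁻¹ * h * (of c) ^ k) * (((of c) ^ k)⁻¹ * h * (of c) ^ k) := by group
        have hnorm : FreeGroup.norm (mk L₁) ≤ N := by
          have h1 : FreeGroup.norm (mk L₁) = L₁.length := norm_mk_isRed hredM.tail
          have h2 : FreeGroup.norm x = L₁.length + 1 := by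
            rw [FreeGroup.norm, hM]
            simp
          omega
        have hres := ih (mk L₁) _ hnorm heq2
        rw [hcomm, hres]
        group
      · -- base case: contradiction via reduced word comparison (unless h = 1)
        by_cases hh1 : h = 1
        · rw [heq, hh1, mul_one]
        exfalso
        push_neg at hhc
        have hne : x.toWord ≠ [] := by rw [hL]; simp
        have hh : ∀ p ∈ x.toWord.head?, p.1 ≠ c := hhc
        have hl : ∀ p ∈ x.toWord.getLast?, p.1 ≠ c := by
          intro p hp
          rw [hL, List.getLast?_concat] at hp
          simp only [Option.mem_def, Option.some_inj] at hp
          subst hp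
          exact hdc
        set L := x.toWord with hLdef
        have hWred : IsRed (((L ++ [(c, true)]) ++ FreeGroup.invRev L) ++ [(c, false)]) :=
          isRed_comm c (isRed_toWord x) hne hh hl
        have hWeq : (x * of c * x⁻¹ * (of c)⁻¹).toWord =
            ((L ++ [(c, true)]) ++ FreeGroup.invRev L) ++ [(c, false)] := by
          conv_lhs => rw [show x = mk L from (FreeGroup.mk_toWord (x := x)).symm]
          rw [comm_mk, toWord_mk_isRed hWred]
        obtain ⟨r, m, hm, _, hsq⟩ := toWord_sq hh1
        rw [← sq] at heq
        rw [heq, hsq] at hWeq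
        -- first: r = []
        have hr : r = [] := by
          rcases r with _ | ⟨c₀, r'⟩
          · rfl
          exfalso
          have e1 : L.head? = some c₀ := by
            have e3 : (((L ++ [(c, true)]) ++ FreeGroup.invRev L) ++ [(c, false)]).head? = L.head? := by
              rw [List.head?_append_of_ne_nil _ (by simp [hne] : (L ++ [(c,true)]) ++ FreeGroup.invRev L ≠ []),
                List.head?_append_of_ne_nil _ (by simp [hne] : L ++ [(c,true)] ≠ []),
                List.head?_append_of_ne_nil _ hne]
            rw [← e3, ← hWeq]
            simp
          have e2 : some ((c : α), false) = some (inv1 c₀) := by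
            have e4 : (((L ++ [(c, true)]) ++ FreeGroup.invRev L) ++ [(c, false)]).getLast? =
                some (inv1 c₀) := by
              rw [← hWeq, invRev_cons]
              rw [show c₀ :: r' ++ (m ++ (m ++ (FreeGroup.invRev r' ++ [inv1 c₀]))) =
                (c₀ :: (r' ++ (m ++ (m ++ FreeGroup.invRev r')))) ++ [inv1 c₀] by simp,
                List.getLast?_concat]
            rw [← e4, List.getLast?_concat]
          have hc₀ : c₀.1 ≠ c := fun hcc => hh c₀ e1 hcc
          apply hc₀
          have e5 : inv1 c₀ = ((c : α), false) := by
            simpa using e2.symm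
          have := congrArg Prod.fst e5
          simpa [inv1] using this
        subst hr
        simp only [FreeGroup.invRev_empty, List.append_nil, List.nil_append] at hWeq
        -- now m ++ m = the commutator word
        have hWeq2 : m ++ m = ((L ++ [(c, true)]) ++ (FreeGroup.invRev L ++ [(c, false)])) := by
          rw [hWeq]
          simp [List.append_assoc]
        have hlen : m.length = (L ++ [(c, true)]).length := by
          have hll := congrArg List.length hWeq2
          simp only [List.length_append, List.length_cons, List.length_nil,
            FreeGroup.invRev_length] at hll ⊢
          omega
        obtain ⟨hm1, hm2⟩ := List.append_inj hWeq2.symm hlen.symm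
        have q1 : m.getLast? = some ((c : α), true) := by rw [← hm1, List.getLast?_concat]
        have q2 : m.getLast? = some ((c : α), false) := by rw [← hm2, List.getLast?_concat]
        rw [q1] at q2
        simp at q2


/-- Centralizer of a generator: anything commuting with `of c` is a power of it. -/
lemma commute_core (c : α) [DecidableEq α] : ∀ (N : ℕ) (x : FreeGroup α), FreeGroup.norm x ≤ N →
    Commute x (of c) → ∃ n : ℤ, x = (of c) ^ n := by
  intro N
  induction N with
  | zero =>
    intro x hn _
    refine ⟨0, ?_⟩
    have : x = 1 := by
      have := Nat.le_zero.1 hn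
      rwa [FreeGroup.norm_eq_zero] at this
    rw [this, zpow_zero]
  | succ N ih =>
    intro x hn hcx
    rcases eq_nil_or_concat x.toWord with hL | ⟨L₀, d, hL⟩
    · refine ⟨0, ?_⟩
      have : x = 1 := FreeGroup.toWord_eq_nil_iff.1 hL
      rw [this, zpow_zero]
    rw [List.concat_eq_append] at hL
    have hredL : IsRed (L₀ ++ [d]) := by rw [← hL]; exact isRed_toWord x
    have hxeq : x = mk L₀ * mk [d] := by
      conv_lhs => rw [← FreeGroup.mk_toWord (x := x), hL, ← FreeGroup.mul_mk]
    by_cases hdc : d.1 = c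
    · have hd : mk [d] = (of c : FreeGroup α) ^ (cond d.2 (1 : ℤ) (-1)) := by
        rcases d with ⟨a, b⟩
        simp only at hdc
        rw [← hdc]
        cases b
        · show mk [(a, false)] = (of a : FreeGroup α) ^ (-1 : ℤ)
          rw [zpow_neg, zpow_one, of_inv_eq_mk]
        · show mk [(a, true)] = (of a : FreeGroup α) ^ (1 : ℤ)
          rw [zpow_one, of_eq_mk]
      set k : ℤ := cond d.2 (1 : ℤ) (-1) with hk
      have hx0 : mk L₀ = x * ((of c) ^ k)⁻¹ := by
        rw [hxeq, hd]
        group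
      have hc0 : Commute (mk L₀) (of c) := by
        rw [hx0]
        exact hcx.mul_left (((Commute.refl (of c)).zpow_left k).inv_left)
      have hnorm : FreeGroup.norm (mk L₀) ≤ N := by
        have h1 : FreeGroup.norm (mk L₀) = L₀.length := norm_mk_isRed hredL.append_left
        have h2 : FreeGroup.norm x = L₀.length + 1 := by
          rw [FreeGroup.norm, hL]; simp
        omega
      obtain ⟨n, hne⟩ := ih (mk L₀) hnorm hc0
      refine ⟨n + k, ?_⟩
      rw [hxeq, hd, hne, ← zpow_add]
    · by_cases hhc : ∃ p ∈ x.toWord.head?, p.1 = c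
      · obtain ⟨p, hp, hpc⟩ := hhc
        rcases hM : x.toWord with _ | ⟨p0, L₁⟩
        · rw [hM] at hL; simp at hL
        have hp0 : p0 = p := by rw [hM] at hp; simpa using hp
        have hpc0 : p0.1 = c := by rw [hp0]; exact hpc
        have hxeq2 : x = mk [p0] * mk L₁ := by
          rw [FreeGroup.mul_mk]
          conv_lhs => rw [← FreeGroup.mk_toWord (x := x), hM]
          rfl
        have hredM : IsRed (p0 :: L₁) := by rw [← hM]; exact isRed_toWord x
        have hp' : mk [p0] = (of c : FreeGroup α) ^ (cond p0.2 (1 : ℤ) (-1)) := by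
          rcases p0 with ⟨a, b⟩
          simp only at hpc0
          rw [← hpc0]
          cases b
          · show mk [(a, false)] = (of a : FreeGroup α) ^ (-1 : ℤ)
            rw [zpow_neg, zpow_one, of_inv_eq_mk]
          · show mk [(a, true)] = (of a : FreeGroup α) ^ (1 : ℤ)
            rw [zpow_one, of_eq_mk]
        set k : ℤ := cond p0.2 (1 : ℤ) (-1) with hk
        have hx1 : mk L₁ = ((of c) ^ k)⁻¹ * x := by
          rw [hxeq2, hp']
          group
        have hc1 : Commute (mk L₁) (of c) := by
          rw [hx1]
          exact (((Commute.refl (of c)).zpow_left k).inv_left).mul_left hcx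
        have hnorm : FreeGroup.norm (mk L₁) ≤ N := by
          have h1 : FreeGroup.norm (mk L₁) = L₁.length := norm_mk_isRed hredM.tail
          have h2 : FreeGroup.norm x = L₁.length + 1 := by
            rw [FreeGroup.norm, hM]; simp
          omega
        obtain ⟨n, hne⟩ := ih (mk L₁) hnorm hc1
        refine ⟨k + n, ?_⟩
        rw [hxeq2, hp', hne, ← zpow_add]
      · exfalso
        push_neg at hhc
        have hne : x.toWord ≠ [] := by rw [hL]; simp
        have hl : ∀ p ∈ x.toWord.getLast?, p.1 ≠ c := by
          intro p hp
          rw [hL, List.getLast?_concat] at hp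
          simp only [Option.mem_def, Option.some_inj] at hp
          subst hp
          exact hdc
        have h1 : x * of c * x⁻¹ * (of c)⁻¹ = 1 := by
          rw [hcx.eq]
          group
        have hWeq : (x * of c * x⁻¹ * (of c)⁻¹).toWord =
            ((x.toWord ++ [(c, true)]) ++ FreeGroup.invRev x.toWord) ++ [(c, false)] := by
          conv_lhs => rw [show x = mk x.toWord from (FreeGroup.mk_toWord (x := x)).symm]
          rw [comm_mk, toWord_mk_isRed (isRed_comm c (isRed_toWord x) hne hhc hl)]
        rw [h1, FreeGroup.toWord_one] at hWeq
        have hlen := congrArg List.length hWeq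
        simp only [List.length_nil, List.length_append, List.length_cons] at hlen
        omega



lemma core' (c : α) [DecidableEq α] (x h : FreeGroup α)
    (heq : x * of c * x⁻¹ * (of c)⁻¹ = h * h) : x * of c * x⁻¹ * (of c)⁻¹ = 1 :=
  core c (FreeGroup.norm x) x h le_rfl heq

lemma commute_of (c : α) [DecidableEq α] (x : FreeGroup α)
    (h : Commute x (of c)) : ∃ n : ℤ, x = (of c) ^ n :=
  commute_core c (FreeGroup.norm x) x le_rfl h

/-- exponent-sum homomorphism at a letter -/
noncomputable def eps [DecidableEq α] (c : α) : FreeGroup α →* Multiplicative ℤ :=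
  FreeGroup.lift (fun s => Multiplicative.ofAdd (if s = c then (1 : ℤ) else 0))

lemma eps_of_self [DecidableEq α] (c : α) :
    eps c (of c) = Multiplicative.ofAdd (1 : ℤ) := by
  simp [eps]

lemma eps_of_ne [DecidableEq α] {c d : α} (h : d ≠ c) : eps c (of d) = 1 := by
  simp [eps, h]

lemma eps_zpow [DecidableEq α] (c : α) (n : ℤ) :
    eps c ((of c) ^ n) = Multiplicative.ofAdd n := by
  rw [map_zpow, eps_of_self]
  rw [← ofAdd_zsmul]
  simp

/-- The two-equations-to-one engine word. -/
def ENG {G : Type*} [Group G] (a P Q : G) : G :=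
  (P * a * P⁻¹ * a) ^ 2 * a * ((P * a * P⁻¹ * a) ^ 2)⁻¹ * a⁻¹ * Q ^ 2

lemma map_ENG {G H : Type*} [Group G] [Group H] (φ : G →* H) (a P Q : G) :
    φ (ENG a P Q) = ENG (φ a) (φ P) (φ Q) := by
  simp [ENG, map_mul, map_pow, map_inv]

lemma engine [DecidableEq α] (c : α) (P Q : FreeGroup α) :
    ENG (of c) P Q = 1 ↔ ((∃ n : ℤ, P = (of c) ^ n) ∧ Q = 1) := by
  set a : FreeGroup α := of c with ha
  set s : FreeGroup α := P * a * P⁻¹ * a with hs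
  constructor
  · intro hE
    have hE' : s ^ 2 * a * (s ^ 2)⁻¹ * a⁻¹ * Q ^ 2 = 1 := hE
    have hK : s ^ 2 * a * (s ^ 2)⁻¹ * a⁻¹ = Q⁻¹ * Q⁻¹ := by
      calc s ^ 2 * a * (s ^ 2)⁻¹ * a⁻¹
          = (s ^ 2 * a * (s ^ 2)⁻¹ * a⁻¹ * Q ^ 2) * (Q ^ 2)⁻¹ := by group
        _ = (Q ^ 2)⁻¹ := by rw [hE']; group
        _ = Q⁻¹ * Q⁻¹ := by group
    have hK1 : s ^ 2 * a * (s ^ 2)⁻¹ * a⁻¹ = 1 := core' c (s ^ 2) Q⁻¹ hK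
    have hQ : Q = 1 := by
      apply sq_eq_one
      calc Q ^ 2 = (s ^ 2 * a * (s ^ 2)⁻¹ * a⁻¹)⁻¹ * (s ^ 2 * a * (s ^ 2)⁻¹ * a⁻¹ * Q ^ 2) := by
            group
        _ = 1 := by rw [hE', hK1]; group
    have hcomm : Commute (s ^ 2) a := by
      have : s ^ 2 * a = a * s ^ 2 := by
        calc s ^ 2 * a = (s ^ 2 * a * (s ^ 2)⁻¹ * a⁻¹) * (a * s ^ 2) := by group
          _ = a * s ^ 2 := by rw [hK1]; group
      exact this
    obtain ⟨m, hm⟩ := commute_of c (s ^ 2) hcomm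
    have hepsP : eps c s = Multiplicative.ofAdd (2 : ℤ) := by
      have h0 : eps c s = eps c P * eps c a * (eps c P)⁻¹ * eps c a := by
        rw [hs]
        simp only [_root_.map_mul, _root_.map_inv]
      rw [h0, ha, eps_of_self]
      have h2 : ∀ u v : Multiplicative ℤ, u * v * u⁻¹ * v = v * v := by
        intro u v
        rw [mul_comm u v]
        group
      rw [h2, ← ofAdd_add]
      norm_num
    have hm4 : m = 4 := by
      have h1 : eps c (s ^ 2) = Multiplicative.ofAdd (4 : ℤ) := by
        rw [map_pow, hepsP, ← ofAdd_nsmul]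
        norm_num
      rw [hm, eps_zpow] at h1
      exact Multiplicative.ofAdd.injective h1
    have hs2 : s ^ 2 = (of c) ^ (4 : ℕ) := by
      rw [hm, hm4]
      norm_cast
    have hs_eq : s = (of c) ^ (2 : ℕ) := sq_eq_pow4 hs2
    have hPa : P * a * P⁻¹ = a := by
      have hsa : P * a * P⁻¹ * a = a ^ (2 : ℕ) := by rw [← hs, hs_eq, ha]
      calc P * a * P⁻¹ = (P * a * P⁻¹ * a) * a⁻¹ := by group
        _ = a ^ (2 : ℕ) * a⁻¹ := by rw [hsa]
        _ = a := by group
    have hcP : Commute P a := by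
      have : P * a = a * P := by
        calc P * a = (P * a * P⁻¹) * P := by group
          _ = a * P := by rw [hPa]
      exact this
    exact ⟨commute_of c P hcP, hQ⟩
  · rintro ⟨⟨n, rfl⟩, rfl⟩
    show ((of c) ^ n * (of c) * ((of c) ^ n)⁻¹ * (of c)) ^ 2 * (of c) *
      (((of c) ^ n * (of c) * ((of c) ^ n)⁻¹ * (of c)) ^ 2)⁻¹ * (of c)⁻¹ *
      ((1 : FreeGroup α) ^ 2) = 1
    group

lemma combine [DecidableEq α] {x₀ y₀ : α} (hxy : x₀ ≠ y₀) (P S : FreeGroup α) :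
    ENG (of x₀) P (ENG (of y₀) P S) = 1 ↔ (P = 1 ∧ S = 1) := by
  constructor
  · intro hE
    obtain ⟨⟨n, hP⟩, hE2⟩ := (engine x₀ P _).1 hE
    obtain ⟨⟨m, hP'⟩, hS⟩ := (engine y₀ P S).1 hE2
    refine ⟨?_, hS⟩
    have h1 : eps x₀ P = Multiplicative.ofAdd n := by rw [hP, eps_zpow]
    have h2 : eps x₀ P = 1 := by
      rw [hP', map_zpow, eps_of_ne (Ne.symm hxy), one_zpow]
    have hn : n = 0 := by
      rw [h1] at h2
      exact Multiplicative.ofAdd.injective h2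
    rw [hP, hn, zpow_zero]
  · rintro ⟨rfl, rfl⟩
    have h2 : ENG (of y₀) (1 : FreeGroup α) (1 : FreeGroup α) = 1 :=
      (engine y₀ 1 1).2 ⟨⟨0, by rw [zpow_zero]⟩, rfl⟩
    rw [h2]
    exact (engine x₀ 1 1).2 ⟨⟨0, by rw [zpow_zero]⟩, rfl⟩


end FGAux

theorem finite_system_equivalent_to_one_equation {X : Type*} (hX : ∃ x y : X, x ≠ y)
    (k d : ℕ) (w : Fin k → FreeGroup (X ⊕ Fin d)) :
    ∃ W : FreeGroup (X ⊕ Fin d),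
      ∀ v : Fin d → FreeGroup X,
        FreeGroup.lift (Sum.elim FreeGroup.of v) W = 1 ↔
          ∀ i, FreeGroup.lift (Sum.elim FreeGroup.of v) (w i) = 1 := by
  classical
  obtain ⟨x₀, y₀, hxy⟩ := hX
  induction k with
  | zero =>
    exact ⟨1, fun v => iff_of_true (map_one _) (fun i => i.elim0)⟩
  | succ k ih =>
    obtain ⟨W', hW'⟩ := ih (fun i => w i.succ)
    refine ⟨FGAux.ENG (FreeGroup.of (Sum.inl x₀)) (w 0)
      (FGAux.ENG (FreeGroup.of (Sum.inl y₀)) (w 0) W'), fun v => ?_⟩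
    set φ := FreeGroup.lift (Sum.elim FreeGroup.of v) with hφ
    have hmap : φ (FGAux.ENG (FreeGroup.of (Sum.inl x₀)) (w 0)
        (FGAux.ENG (FreeGroup.of (Sum.inl y₀)) (w 0) W')) =
        FGAux.ENG (FreeGroup.of x₀) (φ (w 0)) (FGAux.ENG (FreeGroup.of y₀) (φ (w 0)) (φ W')) := by
      rw [FGAux.map_ENG, FGAux.map_ENG]
      have h1 : φ (FreeGroup.of (Sum.inl x₀)) = FreeGroup.of x₀ := by
        rw [hφ, FreeGroup.lift_apply_of]
        rfl
      have h2 : φ (FreeGroup.of (Sum.inl y₀)) = FreeGroup.of y₀ := by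
        rw [hφ, FreeGroup.lift_apply_of]
        rfl
      rw [h1, h2]
    rw [hmap, FGAux.combine hxy]
    rw [hW' v]
    rw [Fin.forall_fin_succ]
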